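/- (Energy decomposition with transport term) With notation as in the Borgnakke–Larsen rules, there exists λ ∈ ℝ with |λ| ≤ s/2 such that ⟨v',I'⟩² = E^⟨⟩·( s/2 + r(1−s) + λ·(V̂·σ) ) and ⟨v'*,I'*⟩² = E^⟨⟩·( s/2 + (1−r)(1−s) − λ·(V̂·σ) ), where s = 1 − (1−R)E/(m·E^⟨⟩) and V̂ = V/|V| (when V ≠ 0; if V = 0 take λ = 0). -/

import Mathlib

open scoped Classical

set_option maxHeartbeats 800000

theorem energy_decomposition
    (m : ℝ) (hm : 0 < m)
    (v vs : EuclideanSpace ℝ (Fin 3)) (I Is : ℝ) (hI : 0 ≤ I) (hIs : 0 ≤ Is)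
    (σ : EuclideanSpace ℝ (Fin 3)) (hσ : ‖σ‖ = 1)
    (r R : ℝ) (hr : r ∈ Set.Icc (0:ℝ) 1) (hR : R ∈ Set.Icc (0:ℝ) 1)
    (V : EuclideanSpace ℝ (Fin 3)) (hV : V = (1/2 : ℝ) • (v + vs))
    (E : ℝ) (hE : E = m / 4 * ‖v - vs‖ ^ 2 + I + Is)
    (v' vs' : EuclideanSpace ℝ (Fin 3)) (I' Is' : ℝ)
    (hv' : v' = V + Real.sqrt (R * E / m) • σ)
    (hvs' : vs' = V - Real.sqrt (R * E / m) • σ)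
    (hI' : I' = r * (1 - R) * E) (hIs' : Is' = (1 - r) * (1 - R) * E)
    (Ebr : ℝ)
    (hEbr : Ebr = (1 + ‖v‖ ^ 2 / 2 + I / m) + (1 + ‖vs‖ ^ 2 / 2 + Is / m))
    (s : ℝ) (hs : s = 1 - (1 - R) * E / (m * Ebr)) :
    ∃ lam : ℝ, |lam| ≤ s / 2 ∧ (V = 0 → lam = 0) ∧
      1 + ‖v'‖ ^ 2 / 2 + I' / m
        = Ebr * (s / 2 + r * (1 - s)
            + lam * (if V = 0 then 0 else (inner ℝ (‖V‖⁻¹ • V) σ : ℝ))) ∧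
      1 + ‖vs'‖ ^ 2 / 2 + Is' / m
        = Ebr * (s / 2 + (1 - r) * (1 - s)
            - lam * (if V = 0 then 0 else (inner ℝ (‖V‖⁻¹ • V) σ : ℝ))) := by
  have hEnn : 0 ≤ E := by nlinarith [sq_nonneg ‖v - vs‖]
  set c : ℝ := Real.sqrt (R * E / m) with hc
  have hc0 : 0 ≤ c := Real.sqrt_nonneg _
  have hc2 : c ^ 2 = R * E / m :=
    Real.sq_sqrt (div_nonneg (mul_nonneg hR.1 hEnn) hm.le)
  have h1 : ‖v + vs‖ ^ 2 = ‖v‖ ^ 2 + 2 * (inner ℝ v vs : ℝ) + ‖vs‖ ^ 2 :=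
    norm_add_sq_real v vs
  have hVn : ‖V‖ ^ 2 = ‖v + vs‖ ^ 2 / 4 := by
    rw [hV, norm_smul]
    have : ‖(1/2 : ℝ)‖ = 1/2 := by norm_num [Real.norm_eq_abs]
    rw [this]; ring
  have h2 : ‖v - vs‖ ^ 2 = ‖v‖ ^ 2 - 2 * (inner ℝ v vs : ℝ) + ‖vs‖ ^ 2 :=
    norm_sub_sq_real v vs
  have hEbr2 : Ebr = 2 + ‖V‖ ^ 2 + E / m := by
    rw [hEbr, hE, hVn, h1, h2]
    field_simp
    ring
  have hEbrpos : 0 < Ebr := by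
    have hEm : 0 ≤ E / m := div_nonneg hEnn hm.le
    nlinarith [sq_nonneg ‖V‖]
  have hsE : Ebr * s = Ebr - (1 - R) * E / m := by
    rw [hs]; field_simp
  have hsE2 : Ebr * s = 2 + ‖V‖ ^ 2 + c ^ 2 := by
    rw [hsE, hEbr2, hc2]; field_simp; ring
  have hs1 : Ebr * (1 - s) = (1 - R) * E / m := by
    rw [mul_sub, mul_one, hsE, hEbr2]; ring
  have hs0 : 0 ≤ s := by
    have h : 0 < Ebr * s := by rw [hsE2]; positivity
    rcases mul_pos_iff.mp h with ⟨_, h2⟩ | ⟨h1, _⟩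
    · exact h2.le
    · linarith
  have hv'n : ‖v'‖ ^ 2 = ‖V‖ ^ 2 + 2 * (c * (inner ℝ V σ : ℝ)) + c ^ 2 := by
    rw [hv', norm_add_sq_real, real_inner_smul_right, norm_smul, hσ,
      Real.norm_eq_abs, abs_of_nonneg hc0]
    ring
  have hvs'n : ‖vs'‖ ^ 2 = ‖V‖ ^ 2 - 2 * (c * (inner ℝ V σ : ℝ)) + c ^ 2 := by
    rw [hvs', norm_sub_sq_real, real_inner_smul_right, norm_smul, hσ,
      Real.norm_eq_abs, abs_of_nonneg hc0]
    ring
  by_cases hV0 : V = 0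
  · refine ⟨0, by simpa using by linarith, fun _ => rfl, ?_, ?_⟩
    · have hip : (inner ℝ V σ : ℝ) = 0 := by rw [hV0]; exact inner_zero_left σ
      rw [if_pos hV0]
      linear_combination hv'n / 2 - hsE2 / 2 - r * hs1 + hI' / m + c * hip
    · have hip : (inner ℝ V σ : ℝ) = 0 := by rw [hV0]; exact inner_zero_left σ
      rw [if_pos hV0]
      linear_combination hvs'n / 2 - hsE2 / 2 - (1 - r) * hs1 + hIs' / m - c * hip
  · have hnV : ‖V‖ ≠ 0 := norm_ne_zero_iff.mpr hV0
    have hD : (inner ℝ ((‖V‖⁻¹ : ℝ) • V) σ : ℝ) = ‖V‖⁻¹ * (inner ℝ V σ : ℝ) :=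
      real_inner_smul_left V σ ‖V‖⁻¹
    refine ⟨c * ‖V‖ / Ebr, ?_, fun h => absurd h hV0, ?_, ?_⟩
    · have hnn : 0 ≤ c * ‖V‖ / Ebr :=
        div_nonneg (mul_nonneg hc0 (norm_nonneg _)) hEbrpos.le
      rw [abs_of_nonneg hnn, div_le_iff₀ hEbrpos]
      have hb : 2 * (c * ‖V‖) ≤ 2 + ‖V‖ ^ 2 + c ^ 2 := by
        nlinarith [sq_nonneg (c - ‖V‖)]
      linarith [hsE2]
    · rw [if_neg hV0, hD]
      have key : Ebr * (c * ‖V‖ / Ebr * (‖V‖⁻¹ * (inner ℝ V σ : ℝ)))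
          = c * (inner ℝ V σ : ℝ) := by field_simp
      linear_combination hv'n / 2 - hsE2 / 2 - r * hs1 + hI' / m - key
    · rw [if_neg hV0, hD]
      have key : Ebr * (c * ‖V‖ / Ebr * (‖V‖⁻¹ * (inner ℝ V σ : ℝ)))
          = c * (inner ℝ V σ : ℝ) := by field_simp
      linear_combination hvs'n / 2 - hsE2 / 2 - (1 - r) * hs1 + hIs' / m + key
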